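/- For every graphon W and for H any graph, m_H(W) = 2^{1-e(H)} · (1 + Σ_{F ∈ E_+(H)} t_F(2W-1)), where E_+(H) is the collection of nonempty subgraphs of H (on the same vertex set, i.e., edge subsets) with an even number of edges. -/

import Mathlib

open MeasureTheory
set_option linter.unusedSectionVars false

/-- Homomorphism density of a finite simple graph `G` in a kernel
`W : [0,1]² → ℝ` (symmetrised, which agrees with the usual definition for
symmetric `W`). -/
noncomputable def homDensity {V : Type*} [Fintype V] [DecidableEq V]
    (G : SimpleGraph V) (W : unitInterval → unitInterval → ℝ) : ℝ :=
  letI := Classical.decRel G.Adj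
  ∫ x : V → unitInterval, ∏ e ∈ G.edgeFinset,
    Sym2.lift ⟨fun a b => (W (x a) (x b) + W (x b) (x a)) / 2, fun a b => by ring⟩ e

/-- `W` is a graphon: measurable, symmetric, with values in `[0,1]`. -/
def IsGraphon (W : unitInterval → unitInterval → ℝ) : Prop :=
  Measurable (fun p : unitInterval × unitInterval => W p.1 p.2) ∧
    (∀ x y, W x y = W y x) ∧ (∀ x y, 0 ≤ W x y) ∧ (∀ x y, W x y ≤ 1)

/-- The complementary graphon `1 - W`. -/
def compl' (W : unitInterval → unitInterval → ℝ) : unitInterval → unitInterval → ℝ :=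
  fun x y => 1 - W x y

/-- Density of a subgraph given by an edge subset `F ⊆ E(H)`. -/
noncomputable def edgeSetDensity {V : Type*} [Fintype V]
    (F : Finset (Sym2 V)) (W : unitInterval → unitInterval → ℝ) : ℝ :=
  ∫ x : V → unitInterval, ∏ e ∈ F,
    Sym2.lift ⟨fun a b => (W (x a) (x b) + W (x b) (x a)) / 2, fun a b => by ring⟩ e


section Aux
variable {V : Type*} [Fintype V] [DecidableEq V]

/-- symmetrised edge factor -/
noncomputable def sf (K : unitInterval → unitInterval → ℝ) (e : Sym2 V)
    (x : V → unitInterval) : ℝ :=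
  Sym2.lift ⟨fun a b => (K (x a) (x b) + K (x b) (x a)) / 2, fun a b => by ring⟩ e

lemma sf_measurable {K : unitInterval → unitInterval → ℝ}
    (hK : Measurable fun p : unitInterval × unitInterval => K p.1 p.2) (e : Sym2 V) :
    Measurable (sf K e) := by
  refine Sym2.inductionOn e fun a b => ?_
  show Measurable fun x : V → unitInterval => (K (x a) (x b) + K (x b) (x a)) / 2
  have ha := hK.comp (Measurable.prodMk (measurable_pi_apply (X := fun _ : V => unitInterval) a)
    (measurable_pi_apply b))
  have hb := hK.comp (Measurable.prodMk (measurable_pi_apply (X := fun _ : V => unitInterval) b)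
    (measurable_pi_apply a))
  exact (ha.add hb).div_const 2

lemma sf_abs_le {K : unitInterval → unitInterval → ℝ}
    (hK : ∀ x y, |K x y| ≤ 1) (e : Sym2 V) (x : V → unitInterval) : |sf K e x| ≤ 1 := by
  refine Sym2.inductionOn e fun a b => ?_
  simp only [sf, Sym2.lift_mk]
  have h1 := hK (x a) (x b)
  have h2 := hK (x b) (x a)
  rw [abs_le] at *
  constructor <;> [linarith [h1.1, h2.1]; linarith [h1.2, h2.2]]

lemma prod_sf_integrable {K : unitInterval → unitInterval → ℝ}
    (hm : Measurable fun p : unitInterval × unitInterval => K p.1 p.2)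
    (hK : ∀ x y, |K x y| ≤ 1) (F : Finset (Sym2 V)) :
    Integrable (fun x : V → unitInterval => ∏ e ∈ F, sf K e x) := by
  refine (integrable_const (1 : ℝ)).mono'
    ((Finset.measurable_prod F fun e _ => sf_measurable hm e).aestronglyMeasurable) ?_
  filter_upwards with x
  rw [Real.norm_eq_abs, Finset.abs_prod]
  exact Finset.prod_le_one (fun e _ => abs_nonneg _) (fun e _ => sf_abs_le hK e x)

lemma even_expand (E : Finset (Sym2 V)) (u : Sym2 V → ℝ) :
    ∏ e ∈ E, ((1 + u e) / 2) + ∏ e ∈ E, ((1 - u e) / 2) =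
      (2 : ℝ) ^ (1 - (E.card : ℤ)) *
        (1 + ∑ F ∈ E.powerset.filter (fun F => F ≠ ∅ ∧ Even F.card), ∏ e ∈ F, u e) := by
  have h1 : ∏ e ∈ E, (1 + u e) = ∑ F ∈ E.powerset, ∏ e ∈ F, u e := by
    rw [show (fun e => 1 + u e) = fun e => u e + 1 by funext e; ring]
    simpa using Finset.prod_add u (fun _ => (1 : ℝ)) E
  have h2 : ∏ e ∈ E, (1 - u e) =
      ∑ F ∈ E.powerset, (-1 : ℝ) ^ F.card * ∏ e ∈ F, u e := by
    have := Finset.prod_add (fun e => -u e) (fun _ => (1 : ℝ)) E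
    simp only [Finset.prod_const_one, mul_one] at this
    rw [show (fun e : Sym2 V => 1 - u e) = fun e => -u e + 1 by funext e; ring, this]
    refine Finset.sum_congr rfl fun F _ => ?_
    rw [show (fun e : Sym2 V => -u e) = fun e => (-1) * u e by funext e; ring,
      Finset.prod_mul_distrib, Finset.prod_const]
  have h3 : ∑ F ∈ E.powerset, ∏ e ∈ F, u e +
      ∑ F ∈ E.powerset, (-1 : ℝ) ^ F.card * ∏ e ∈ F, u e =
      2 * (1 + ∑ F ∈ E.powerset.filter (fun F => F ≠ ∅ ∧ Even F.card), ∏ e ∈ F, u e) := by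
    rw [← Finset.sum_add_distrib]
    have step : ∀ F ∈ E.powerset, (∏ e ∈ F, u e) + (-1 : ℝ) ^ F.card * ∏ e ∈ F, u e =
        if Even F.card then 2 * ∏ e ∈ F, u e else 0 := by
      intro F _
      rcases Nat.even_or_odd F.card with h | h
      · rw [if_pos h, h.neg_one_pow]; ring
      · rw [if_neg (Nat.not_even_iff_odd.mpr h), h.neg_one_pow]; ring
    rw [Finset.sum_congr rfl step, Finset.sum_ite, Finset.sum_const_zero, add_zero,
      ← Finset.mul_sum]
    congr 1
    have hsplit : E.powerset.filter (fun F => Even F.card) =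
        insert ∅ (E.powerset.filter (fun F => F ≠ ∅ ∧ Even F.card)) := by
      ext F
      simp only [Finset.mem_insert, Finset.mem_filter]
      by_cases hF : F = ∅ <;> simp [hF]
    rw [hsplit, Finset.sum_insert (by simp)]
    simp
  have hpow : ((2 : ℝ) ^ (E.card : ℕ)) ≠ 0 := by positivity
  have key : ∏ e ∈ E, ((1 + u e) / 2) + ∏ e ∈ E, ((1 - u e) / 2) =
      (∏ e ∈ E, (1 + u e) + ∏ e ∈ E, (1 - u e)) / 2 ^ E.card := by
    rw [Finset.prod_div_distrib, Finset.prod_div_distrib, Finset.prod_const, ← add_div]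
  rw [key, h1, h2, h3, zpow_sub₀ (by norm_num : (2:ℝ) ≠ 0), zpow_one, zpow_natCast]
  field_simp

end Aux

theorem mH_even_expansion {V : Type*} [Fintype V] [DecidableEq V]
    (H : SimpleGraph V) [DecidableRel H.Adj]
    (W : unitInterval → unitInterval → ℝ) (hW : IsGraphon W) :
    homDensity H W + homDensity H (compl' W) =
      (2 : ℝ) ^ (1 - (H.edgeFinset.card : ℤ)) *
        (1 + ∑ F ∈ H.edgeFinset.powerset.filter (fun F => F ≠ ∅ ∧ Even F.card),
          edgeSetDensity F (fun x y => 2 * W x y - 1)) := by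
  classical
  obtain ⟨hm, hsymm, h0, h1⟩ := hW
  set U : unitInterval → unitInterval → ℝ := fun x y => 2 * W x y - 1 with hUdef
  have hmU : Measurable fun p : unitInterval × unitInterval => U p.1 p.2 :=
    (hm.const_mul 2).sub measurable_const
  have hmC : Measurable fun p : unitInterval × unitInterval => compl' W p.1 p.2 :=
    measurable_const.sub hm
  have haW : ∀ x y, |W x y| ≤ 1 := fun x y => abs_le.2 ⟨by linarith [h0 x y], h1 x y⟩
  have haC : ∀ x y, |compl' W x y| ≤ 1 := fun x y => abs_le.2
    ⟨by simp [compl']; linarith [h1 x y], by simp [compl']; linarith [h0 x y]⟩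
  have haU : ∀ x y, |U x y| ≤ 1 := fun x y => abs_le.2
    ⟨by simp [hUdef]; linarith [h0 x y], by simp [hUdef]; linarith [h1 x y]⟩
  -- edgeFinset with the classical instance equals the given one
  have hedge : ∀ (i j : Fintype H.edgeSet),
      (@SimpleGraph.edgeFinset V H i) = (@SimpleGraph.edgeFinset V H j) := fun i j => by
    ext e
    rw [@SimpleGraph.mem_edgeFinset _ _ _ i, @SimpleGraph.mem_edgeFinset _ _ _ j]
  have hhomW : homDensity H W = ∫ x : V → unitInterval, ∏ e ∈ H.edgeFinset, sf W e x := by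
    rw [homDensity]; congr 1; funext x; exact Finset.prod_congr (hedge _ _) (fun e _ => rfl)
  have hhomC : homDensity H (compl' W) =
      ∫ x : V → unitInterval, ∏ e ∈ H.edgeFinset, sf (compl' W) e x := by
    rw [homDensity]; congr 1; funext x; exact Finset.prod_congr (hedge _ _) (fun e _ => rfl)
  have hesd : ∀ F : Finset (Sym2 V),
      edgeSetDensity F U = ∫ x : V → unitInterval, ∏ e ∈ F, sf U e x := fun F => rfl
  -- pointwise edge identities
  have hWe : ∀ (e : Sym2 V) (x : V → unitInterval), sf W e x = (1 + sf U e x) / 2 := by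
    intro e x
    refine Sym2.inductionOn e fun a b => ?_
    simp only [sf, Sym2.lift_mk, hUdef]; ring
  have hCe : ∀ (e : Sym2 V) (x : V → unitInterval),
      sf (compl' W) e x = (1 - sf U e x) / 2 := by
    intro e x
    refine Sym2.inductionOn e fun a b => ?_
    simp only [sf, Sym2.lift_mk, hUdef, compl']; ring
  have hintW := prod_sf_integrable hm haW H.edgeFinset
  have hintC := prod_sf_integrable hmC haC H.edgeFinset
  rw [hhomW, hhomC, ← integral_add hintW hintC]
  have hpt : (fun x : V → unitInterval =>
      ∏ e ∈ H.edgeFinset, sf W e x + ∏ e ∈ H.edgeFinset, sf (compl' W) e x) =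
      fun x => (2 : ℝ) ^ (1 - (H.edgeFinset.card : ℤ)) *
        (1 + ∑ F ∈ H.edgeFinset.powerset.filter (fun F => F ≠ ∅ ∧ Even F.card),
          ∏ e ∈ F, sf U e x) := by
    funext x
    rw [Finset.prod_congr rfl (fun e _ => hWe e x),
      Finset.prod_congr rfl (fun e _ => hCe e x)]
    exact even_expand H.edgeFinset (fun e => sf U e x)
  rw [hpt, integral_const_mul]
  congr 1
  rw [integral_add (integrable_const 1)
      (integrable_finset_sum _ fun F _ => prod_sf_integrable hmU haU F),
    integral_const, integral_finset_sum _ fun F _ => prod_sf_integrable hmU haU F]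
  simp [hesd]
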